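/- Let (X,d) be a compact metric space with the E_{1,0}-property. Then the intrinsic distance d_I takes only finite values on X × X, and the map d_I : X × X → ℝ is continuous (with respect to the topology induced by d). -/

import Mathlib

open Filter Topology Set MeasureTheory
open scoped ENNReal NNReal

/-- The local (descent) slope of `u` at `x`, relative to the ambient set `A`. -/
noncomputable def locSlopeOn {X : Type*} [PseudoMetricSpace X] (u : X → ℝ) (A : Set X) (x : X) :
    ℝ≥0∞ :=
  Filter.limsup (fun y => ENNReal.ofReal (max (u x - u y) 0 / dist x y)) (𝓝[A \ {x}] x)

/-- The local (descent) slope of `u` at `x`. -/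
noncomputable def locSlope {X : Type*} [PseudoMetricSpace X] (u : X → ℝ) (x : X) : ℝ≥0∞ :=
  locSlopeOn u Set.univ x

/-- The intrinsic (length) distance between two points. -/
noncomputable def intrinsicDist {X : Type*} [PseudoMetricSpace X] (x y : X) : ℝ≥0∞ :=
  ⨅ (T : ℝ) (_ : 0 ≤ T) (γ : ℝ → X) (_ : ContinuousOn γ (Set.Icc 0 T))
    (_ : γ 0 = x) (_ : γ T = y), eVariationOn γ (Set.Icc 0 T)

/-- Compatibility condition (CC). -/
def SatisfiesCC {X : Type*} [PseudoMetricSpace X] (Ω : Set X) (ℓ g : X → ℝ) : Prop :=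
  ∀ x ∈ frontier Ω, ∀ y ∈ frontier Ω, ∀ T > (0:ℝ), ∀ γ : ℝ → X,
    LipschitzOnWith 1 γ (Set.Icc 0 T) → Set.MapsTo γ (Set.Icc 0 T) (closure Ω) →
    γ 0 = y → γ T = x → Set.MapsTo γ (Set.Ioo 0 T) Ω →
    g x - g y ≤ ∫ t in (0:ℝ)..T, ℓ (γ t)

/-- Continuous pointwise solution of the slope eikonal equation. -/
def IsEikonalSol {X : Type*} [PseudoMetricSpace X] (Ω : Set X) (ℓ g u : X → ℝ) : Prop :=
  ContinuousOn u (closure Ω) ∧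
  (∀ x ∈ Ω, locSlopeOn u (closure Ω) x = ENNReal.ofReal (ℓ x)) ∧
  ∀ x ∈ frontier Ω, u x = g x

/-- Eikonal space. -/
def IsEikonalSpace (X : Type*) [MetricSpace X] : Prop :=
  ∀ Ω : Set X, IsOpen Ω → Ω.Nonempty → Ω ≠ Set.univ →
    ∀ ℓ g : X → ℝ, ContinuousOn ℓ Ω → (∃ M, ∀ x ∈ Ω, |ℓ x| ≤ M) →
      (∃ c > 0, ∀ x ∈ Ω, c ≤ ℓ x) → ContinuousOn g (frontier Ω) →
      SatisfiesCC Ω ℓ g → ∃ u : X → ℝ, IsEikonalSol Ω ℓ g u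

/-- The `E_{1,0}` property. -/
def HasE10 (X : Type*) [MetricSpace X] : Prop :=
  ∀ K : Set X, IsClosed K → K.Nonempty →
    ∃ u : X → ℝ, Continuous u ∧ (∀ x ∉ K, locSlope u x = 1) ∧ ∀ x ∈ K, u x = 0

section AuxMain

variable {X : Type*} [MetricSpace X]


/-- Extraction from `locSlope u x = 1`: points arbitrarily close with big descent. -/
lemma slope_extract {u : X → ℝ} {x : X} (hs : locSlope u x = 1) {c : ℝ} (hc0 : 0 ≤ c)
    (hc1 : c < 1) {r : ℝ} (hr : 0 < r) :
    ∃ z, z ≠ x ∧ dist x z < r ∧ c * dist x z < u x - u z := by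
  have hlt : (ENNReal.ofReal c) < limsup
      (fun y => ENNReal.ofReal (max (u x - u y) 0 / dist x y)) (𝓝[Set.univ \ {x}] x) := by
    rw [show limsup (fun y => ENNReal.ofReal (max (u x - u y) 0 / dist x y)) (𝓝[Set.univ \ {x}] x)
        = locSlope u x from rfl, hs]
    exact ENNReal.ofReal_lt_one.2 hc1
  have hfreq := Filter.frequently_lt_of_lt_limsup (by isBoundedDefault) hlt
  have hball : ∀ᶠ z in 𝓝[Set.univ \ {x}] x, dist x z < r := by
    filter_upwards [nhdsWithin_le_nhds (Metric.ball_mem_nhds x hr)] with z hz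
    rw [dist_comm]; exact hz
  have hmem : ∀ᶠ z in 𝓝[Set.univ \ {x}] x, z ∈ Set.univ \ {x} := self_mem_nhdsWithin
  obtain ⟨z, h1, h2, h3⟩ := (hfreq.and_eventually (hball.and hmem)).exists
  have hzx : z ≠ x := by simpa using h3.2
  have hd : 0 < dist x z := by rw [dist_comm]; exact dist_pos.2 hzx
  have hcc : c < max (u x - u z) 0 / dist x z := by
    have := (ENNReal.ofReal_lt_ofReal_iff_of_nonneg hc0).1 h1
    exact this
  have hmax : c * dist x z < max (u x - u z) 0 := by
    rw [lt_div_iff₀ hd] at hcc; exact hcc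
  refine ⟨z, hzx, h2, ?_⟩
  rcases le_or_gt (u x - u z) 0 with hle | hpos
  · rw [max_eq_right hle] at hmax
    exact absurd hmax (not_lt.2 (mul_nonneg hc0 hd.le))
  · rwa [max_eq_left hpos.le] at hmax

/-- If the slope is 1 off `K` and `u` vanishes on `K`, then `u` is nonnegative. -/
lemma u_nonneg [CompactSpace X] [Nonempty X] {u : X → ℝ} {K : Set X} (hu : Continuous u)
    (hs : ∀ x ∉ K, locSlope u x = 1) (h0 : ∀ x ∈ K, u x = 0) : ∀ z, 0 ≤ u z := by
  obtain ⟨xm, -, hmin⟩ := isCompact_univ.exists_isMinOn univ_nonempty hu.continuousOn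
  have hminle : ∀ z, u xm ≤ u z := fun z => hmin (mem_univ z)
  by_cases hxK : xm ∈ K
  · intro z; rw [← h0 xm hxK]; exact hminle z
  · exfalso
    have h1 := hs xm hxK
    have hz : locSlope u xm ≤ 0 := by
      apply Filter.limsup_le_of_le (by isBoundedDefault)
      apply Filter.Eventually.of_forall
      intro z
      rw [max_eq_right (sub_nonpos.2 (hminle z)), zero_div, ENNReal.ofReal_zero]
    rw [h1] at hz
    exact absurd hz (by simp)

/-- eVariation bound for a 1-Lipschitz curve. -/
lemma lip_eVariationOn {γ : ℝ → X} (hγ : LipschitzWith 1 γ) {L : ℝ} (hL : 0 ≤ L) :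
    eVariationOn γ (Set.Icc 0 L) ≤ ENNReal.ofReal L := by
  have h1 : eVariationOn (γ ∘ id) (Set.Icc 0 L) ≤ (1 : ℝ≥0) * eVariationOn id (Set.Icc 0 L) :=
    LipschitzOnWith.comp_eVariationOn_le (hγ.lipschitzOnWith) (mapsTo_univ _ _)
  have h2 : eVariationOn (id : ℝ → ℝ) (Set.Icc 0 L) ≤ ENNReal.ofReal (L - 0) := by
    have := MonotoneOn.eVariationOn_le (f := (id : ℝ → ℝ)) (s := Set.univ)
      (monotoneOn_id) (mem_univ 0) (mem_univ L)
    simpa using this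
  calc eVariationOn γ (Set.Icc 0 L) = eVariationOn (γ ∘ id) (Set.Icc 0 L) := rfl
    _ ≤ (1 : ℝ≥0) * eVariationOn id (Set.Icc 0 L) := h1
    _ = eVariationOn id (Set.Icc 0 L) := by simp
    _ ≤ ENNReal.ofReal (L - 0) := h2
    _ = ENNReal.ofReal L := by rw [sub_zero]



lemma chain_exists [CompactSpace X] {u : X → ℝ} {K : Set X} (hu : Continuous u)
    (hs : ∀ x ∉ K, locSlope u x = 1) (hnn : ∀ z, 0 ≤ u z)
    (x : X) {η : ℝ} (hη : 0 < η) :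
    ∃ N, ∃ c : ℕ → X, c 0 = x ∧ c N ∈ K ∧
      (∀ i < N, dist (c i) (c (i+1)) ≤ η) ∧
      (∀ i < N, dist (c i) (c (i+1)) ≤ 2 * (u (c i) - u (c (i+1)))) := by
  classical
  -- admissible displacement sets
  set A : X → Set ℝ := fun t => (dist t) '' {z | dist t z ≤ η ∧ dist t z ≤ 2 * (u t - u z)}
    with hA
  have h0A : ∀ t, (0:ℝ) ∈ A t := fun t =>
    ⟨t, ⟨by simp [hη.le], by simp⟩, by simp⟩
  have hbdd : ∀ t, BddAbove (A t) := by
    intro t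
    refine ⟨η, ?_⟩
    rintro a ⟨z, hz, rfl⟩
    exact hz.1
  set σ : X → ℝ := fun t => sSup (A t) with hσ
  have hσpos : ∀ t ∉ K, 0 < σ t := by
    intro t ht
    obtain ⟨z, hzt, hzr, hzu⟩ := slope_extract (hs t ht) (by norm_num : (0:ℝ) ≤ 1/2)
      (by norm_num) hη
    have hd : 0 < dist t z := dist_pos.2 (Ne.symm hzt)
    have hmem : dist t z ∈ A t :=
      ⟨z, ⟨hzr.le, by nlinarith⟩, rfl⟩
    exact lt_of_lt_of_le hd (le_csSup (hbdd t) hmem)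
  have hstep : ∀ t, ∃ z, (dist t z ≤ η ∧ dist t z ≤ 2 * (u t - u z)) ∧
      (t ∉ K → σ t / 2 < dist t z) ∧ (t ∈ K → z = t) := by
    intro t
    by_cases ht : t ∈ K
    · exact ⟨t, ⟨by simp [hη.le], by simp⟩, fun h => absurd ht h, fun _ => rfl⟩
    · obtain ⟨a, ⟨z, hz, rfl⟩, ha⟩ := exists_lt_of_lt_csSup ⟨0, h0A t⟩
        (half_lt_self (hσpos t ht))
      exact ⟨z, hz, fun _ => ha, fun h => absurd h ht⟩
  set next : X → X := fun t => Classical.choose (hstep t) with hnextdef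
  have hnext : ∀ t, (dist t (next t) ≤ η ∧ dist t (next t) ≤ 2 * (u t - u (next t))) ∧
      (t ∉ K → σ t / 2 < dist t (next t)) ∧ (t ∈ K → next t = t) :=
    fun t => Classical.choose_spec (hstep t)
  set c : ℕ → X := fun n => next^[n] x with hc
  have hcsucc : ∀ n, c (n+1) = next (c n) := fun n => Function.iterate_succ_apply' next n x
  set v : ℕ → ℝ := fun n => u (c n) with hv
  set d : ℕ → ℝ := fun n => dist (c n) (c (n+1)) with hd
  have hdη : ∀ n, d n ≤ η := fun n => by
    have := (hnext (c n)).1.1; rwa [← hcsucc n] at this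
  have hdu : ∀ n, d n ≤ 2 * (v n - v (n+1)) := fun n => by
    have := (hnext (c n)).1.2; rwa [← hcsucc n] at this
  have hva : Antitone v := antitone_nat_of_succ_le fun n => by
    have h1 := hdu n
    have h2 : 0 ≤ d n := dist_nonneg
    linarith
  have hdsum : ∀ n m, n ≤ m → dist (c n) (c m) ≤ 2 * (v n - v m) := by
    intro n m hnm
    induction m, hnm using Nat.le_induction with
    | base => simp
    | succ m hnm ih =>
      calc dist (c n) (c (m+1)) ≤ dist (c n) (c m) + d m := dist_triangle _ _ _
        _ ≤ 2 * (v n - v m) + 2 * (v m - v (m+1)) := add_le_add ih (hdu m)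
        _ = 2 * (v n - v (m+1)) := by ring
  by_cases hex : ∃ n, c n ∈ K
  · obtain ⟨n, hn⟩ := hex
    exact ⟨n, c, rfl, hn, fun i _ => hdη i, fun i _ => hdu i⟩
  · push_neg at hex
    -- v converges; c is Cauchy
    have hvbdd : BddBelow (Set.range v) := ⟨0, by rintro a ⟨n, rfl⟩; exact hnn _⟩
    have hvt : Tendsto v atTop (𝓝 (⨅ n, v n)) := tendsto_atTop_ciInf hva hvbdd
    have hccauchy : CauchySeq c := by
      rw [Metric.cauchySeq_iff']
      intro ε hε
      obtain ⟨N, hN⟩ := (Metric.cauchySeq_iff'.1 hvt.cauchySeq) (ε/2) (by linarith)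
      refine ⟨N, fun n hn => ?_⟩
      have h1 : dist (c N) (c n) ≤ 2 * (v N - v n) := hdsum N n hn
      have h2 : |v n - v N| < ε/2 := by simpa [Real.dist_eq] using hN n hn
      rw [dist_comm]
      have : v N - v n ≤ |v n - v N| := by rw [abs_sub_comm]; exact le_abs_self _
      linarith
    obtain ⟨xl, hcl⟩ := cauchySeq_tendsto_of_complete hccauchy
    have huc : Tendsto v atTop (𝓝 (u xl)) := (hu.tendsto xl).comp hcl
    have hvge : ∀ n, u xl ≤ v n := fun n => hva.le_of_tendsto huc n
    have hdistl : ∀ n, dist (c n) xl ≤ 2 * (v n - u xl) := by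
      intro n
      have h1 : Tendsto (fun m => dist (c n) (c m)) atTop (𝓝 (dist (c n) xl)) :=
        Filter.Tendsto.dist tendsto_const_nhds hcl
      have h2 : Tendsto (fun m => 2 * (v n - v m)) atTop (𝓝 (2 * (v n - u xl))) := by
        exact (tendsto_const_nhds.sub huc).const_mul 2
      refine le_of_tendsto_of_tendsto h1 h2 ?_
      filter_upwards [eventually_ge_atTop n] with m hm using hdsum n m hm
    by_cases hxK : xl ∈ K
    · -- append the limit point
      obtain ⟨N, hN⟩ := Metric.tendsto_atTop.1 hcl η hη
      obtain ⟨n, hn⟩ : ∃ n, dist (c n) xl < η := ⟨N, hN N le_rfl⟩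
      refine ⟨n + 1, fun i => if i ≤ n then c i else xl, by simp [hc], by simp [hxK], ?_, ?_⟩
      · intro i hi
        rcases lt_or_ge i n with h | h
        · simpa [Nat.le_of_lt h, Nat.succ_le_of_lt h] using hdη i
        · have hin : i = n := by omega
          subst hin
          simp only [le_refl, if_pos, Nat.lt_irrefl, if_neg (by omega : ¬ i + 1 ≤ i)]
          exact (hn).le
      · intro i hi
        rcases lt_or_ge i n with h | h
        · simpa [Nat.le_of_lt h, Nat.succ_le_of_lt h] using hdu i
        · have hin : i = n := by omega
          subst hin
          simp only [le_refl, if_pos, if_neg (by omega : ¬ i + 1 ≤ i)]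
          exact hdistl i
    · exfalso
      obtain ⟨z₀, hz₀ne, hz₀r, hz₀u⟩ := slope_extract (hs xl hxK)
        (by norm_num : (0:ℝ) ≤ 3/4) (by norm_num) (half_pos hη)
      set δ := dist xl z₀ with hδ
      have hδpos : 0 < δ := dist_pos.2 (Ne.symm hz₀ne)
      have hd0 : Tendsto d atTop (𝓝 0) := by
        have h2 : Tendsto (fun n => 2 * (v n - v (n+1))) atTop (𝓝 (2 * (u xl - u xl))) :=
          (huc.sub (huc.comp (tendsto_add_atTop_nat 1))).const_mul 2
        rw [show (2 : ℝ) * (u xl - u xl) = 0 by ring] at h2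
        exact tendsto_of_tendsto_of_tendsto_of_le_of_le tendsto_const_nhds h2
          (fun n => dist_nonneg) hdu
      have hev1 : ∀ᶠ n in atTop, dist (c n) xl < δ/8 :=
        eventually_atTop.2 (Metric.tendsto_atTop.1 hcl (δ/8) (by linarith))
      have hev2 : ∀ᶠ n in atTop, 2 * d n < (7/8) * δ := by
        have := hd0.eventually (eventually_lt_nhds (show (0:ℝ) < (7/16) * δ by linarith))
        filter_upwards [this] with n hn
        linarith
      obtain ⟨n, h1, h2⟩ := (hev1.and hev2).exists
      -- z₀ is admissible from c n
      have hucn : u xl ≤ v n := hvge n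
      have hdcz : dist (c n) z₀ ≤ dist (c n) xl + δ := by
        have := dist_triangle (c n) xl z₀
        linarith [this]
      have hdcz2 : δ - δ/8 ≤ dist (c n) z₀ := by
        have := dist_triangle xl (c n) z₀
        rw [dist_comm xl (c n)] at this
        linarith
      have hmem : dist (c n) z₀ ∈ A (c n) := by
        refine ⟨z₀, ⟨?_, ?_⟩, rfl⟩
        · linarith
        · have : (3/4) * δ < u (c n) - u z₀ := by
            have : u xl - u z₀ ≤ u (c n) - u z₀ := by
              have := hvge n; simp only [hv] at this ⊢; linarith
            linarith [hz₀u]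
          linarith
      have hσlow : (7/8) * δ ≤ σ (c n) := by
        calc (7/8) * δ = δ - δ/8 := by ring
          _ ≤ dist (c n) z₀ := hdcz2
          _ ≤ σ (c n) := le_csSup (hbdd (c n)) hmem
      have hσhigh : σ (c n) / 2 < d n := by
        have := (hnext (c n)).2.1 (hex n); rwa [← hcsucc n] at this
      linarith

lemma curve_of_chains [CompactSpace X] (x y : X) {L : ℝ} (hL : 0 ≤ L)
    (H : ∀ η > (0:ℝ), ∃ N, ∃ c : ℕ → X, c 0 = x ∧ c N = y ∧
      (∀ i < N, dist (c i) (c (i+1)) ≤ η) ∧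
      (∑ i ∈ Finset.range N, dist (c i) (c (i+1))) ≤ L) :
    ∃ γ : ℝ → X, LipschitzWith 1 γ ∧ γ 0 = x ∧ γ L = y := by
  classical
  have hηpos : ∀ n : ℕ, (0:ℝ) < 1/((n:ℝ)+1) := fun n => by positivity
  choose N c h0 hend hmesh hlen using fun n : ℕ => H (1/((n:ℝ)+1)) (hηpos n)
  set t : ℕ → ℕ → ℝ := fun n i => ∑ k ∈ Finset.range i, dist (c n k) (c n (k+1)) with ht
  have ht0 : ∀ n, t n 0 = 0 := fun n => by simp [ht]
  have htsucc : ∀ n i, t n (i+1) = t n i + dist (c n i) (c n (i+1)) := fun n i => by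
    simp [ht, Finset.sum_range_succ]
  have htmono : ∀ n, Monotone (t n) := fun n =>
    monotone_nat_of_le_succ fun i => by rw [htsucc]; linarith [(dist_nonneg : (0:ℝ) ≤ dist (c n i) (c n (i+1)))]
  have htnn : ∀ n i, 0 ≤ t n i := fun n i => by rw [← ht0 n]; exact htmono n (Nat.zero_le i)
  have htL : ∀ n, t n (N n) ≤ L := fun n => hlen n
  have hchain : ∀ n, ∀ i j, i ≤ j → dist (c n i) (c n j) ≤ t n j - t n i := by
    intro n i j hij
    induction j, hij using Nat.le_induction with
    | base => simp
    | succ j hij ih =>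
      calc dist (c n i) (c n (j+1)) ≤ dist (c n i) (c n j) + dist (c n j) (c n (j+1)) :=
            dist_triangle _ _ _
        _ ≤ t n j - t n i + dist (c n j) (c n (j+1)) := by linarith
        _ = t n (j+1) - t n i := by rw [htsucc]; ring
  set F : ℕ → ℝ → Finset ℕ := fun n s => (Finset.range (N n + 1)).filter (fun i => t n i ≤ s)
    with hF
  set idx : ℕ → ℝ → ℕ := fun n s => ((F n s).max).getD 0 with hidx
  have hFne : ∀ n s, 0 ≤ s → 0 ∈ F n s := fun n s hs => by
    simp [hF, Finset.mem_filter, ht0, hs, Nat.succ_pos]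
  have hidxmem : ∀ n s, 0 ≤ s → idx n s ∈ F n s ∧ ∀ b ∈ F n s, b ≤ idx n s := by
    intro n s hs
    obtain ⟨a, ha⟩ := Finset.max_of_nonempty ⟨0, hFne n s hs⟩
    have haidx : idx n s = a := by simp only [hidx]; rw [ha]; rfl
    rw [haidx]
    refine ⟨Finset.mem_of_max ha, fun b hb => ?_⟩
    have := Finset.le_max hb
    rw [ha] at this
    exact_mod_cast this
  have hidxN : ∀ n s, idx n s ≤ N n := by
    intro n s
    rcases le_or_gt 0 s with hs | hs
    · have := (hidxmem n s hs).1
      simp only [hF] at this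
      simp only [Finset.mem_filter, Finset.mem_range] at this
      omega
    · have : F n s = ∅ := by
        simp only [hF]
        ext i
        simp only [Finset.mem_filter, Finset.mem_range, Finset.notMem_empty, iff_false, not_and]
        intro _
        intro hc'
        linarith [htnn n i]
      simp only [hidx]; rw [this]
      exact Nat.zero_le _
  have hidxle : ∀ n s, 0 ≤ s → t n (idx n s) ≤ s := by
    intro n s hs
    have := (hidxmem n s hs).1
    simp only [hF] at this
    simp only [Finset.mem_filter] at this
    exact this.2
  have hidxlt : ∀ n s, 0 ≤ s → idx n s < N n → s < t n (idx n s + 1) := by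
    intro n s hs hlt
    by_contra hcon
    push_neg at hcon
    have hmem : idx n s + 1 ∈ F n s := by
      simp only [hF]
      simp only [Finset.mem_filter, Finset.mem_range]
      exact ⟨by omega, hcon⟩
    have := (hidxmem n s hs).2 _ hmem
    omega
  have hidxtop : ∀ n s, t n (N n) ≤ s → idx n s = N n := by
    intro n s hs
    have hs0 : 0 ≤ s := le_trans (htnn n (N n)) hs
    have hmem : N n ∈ F n s := by
      simp only [hF]; simp only [Finset.mem_filter, Finset.mem_range]; exact ⟨by omega, hs⟩
    have h1 := (hidxmem n s hs0).2 _ hmem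
    have h2 := hidxN n s
    omega
  -- raw curve and clamped curve
  set γr : ℕ → ℝ → X := fun n s => c n (idx n s) with hγr
  have hraw : ∀ n, ∀ s s' : ℝ, 0 ≤ s → s ≤ s' →
      dist (γr n s) (γr n s') ≤ s' - s + 1/((n:ℝ)+1) := by
    intro n s s' hs hss
    have hs' : 0 ≤ s' := le_trans hs hss
    have hij : idx n s ≤ idx n s' := by
      apply (hidxmem n s' hs').2
      have := (hidxmem n s hs).1
      simp only [hF] at this ⊢
      simp only [Finset.mem_filter] at this ⊢
      exact ⟨this.1, le_trans this.2 hss⟩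
    rcases eq_or_lt_of_le (hidxN n s) with htop | hlt
    · have h2 : idx n s' = N n := by
        have := hidxN n s'
        omega
      simp only [hγr, htop, h2]
      rw [dist_self]
      have := hηpos n
      linarith
    · have h1 : s < t n (idx n s + 1) := hidxlt n s hs hlt
      have h2 : t n (idx n s + 1) = t n (idx n s) + dist (c n (idx n s)) (c n (idx n s + 1)) :=
        htsucc n _
      have h3 : dist (c n (idx n s)) (c n (idx n s + 1)) ≤ 1/((n:ℝ)+1) := hmesh n _ hlt
      have h4 : dist (c n (idx n s)) (c n (idx n s')) ≤ t n (idx n s') - t n (idx n s) :=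
        hchain n _ _ hij
      have h5 : t n (idx n s') ≤ s' := hidxle n s' hs'
      simp only [hγr]
      linarith
  set γf : ℕ → ℝ → X := fun n s => γr n (max s 0) with hγf
  have hγfdist : ∀ n, ∀ s s' : ℝ, dist (γf n s) (γf n s') ≤ dist s s' + 1/((n:ℝ)+1) := by
    intro n s s'
    have key : ∀ a b : ℝ, a ≤ b → dist (γf n a) (γf n b) ≤ dist a b + 1/((n:ℝ)+1) := by
      intro a b hab
      have h1 : max a 0 ≤ max b 0 := max_le_max hab le_rfl
      have := hraw n (max a 0) (max b 0) (le_max_right a 0) h1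
      simp only [hγf, hγr]
      have h2 : max b 0 - max a 0 ≤ b - a := by
        rcases le_or_gt a 0 with ha | ha
        · rcases le_or_gt b 0 with hb | hb
          · simp [max_eq_right ha, max_eq_right hb]; linarith
          · rw [max_eq_right ha, max_eq_left hb.le]; linarith
        · rw [max_eq_left ha.le, max_eq_left (le_trans ha.le hab)]
      rw [Real.dist_eq, abs_of_nonpos (by linarith : a - b ≤ 0)]
      linarith
    rcases le_total s s' with hss | hss
    · exact key s s' hss
    · rw [dist_comm, dist_comm s s']
      exact key s' s hss
  have hγf0 : ∀ n, γf n 0 = x := by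
    intro n
    have h1 : t n (idx n 0) ≤ 0 := hidxle n 0 le_rfl
    have h2 : t n (idx n 0) = 0 := le_antisymm h1 (htnn n _)
    have h3 : dist (c n 0) (c n (idx n 0)) ≤ t n (idx n 0) - t n 0 :=
      hchain n 0 _ (Nat.zero_le _)
    rw [h2, ht0 n, sub_zero] at h3
    have h4 : c n (idx n 0) = c n 0 := by
      have h5 : (0:ℝ) ≤ dist (c n 0) (c n (idx n 0)) := dist_nonneg
      have h6 : dist (c n 0) (c n (idx n 0)) = 0 := le_antisymm h3 h5
      exact (dist_eq_zero.1 h6).symm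
    simp only [hγf, hγr, max_self]
    rw [h4, h0 n]
  have hγfL : ∀ n, γf n L = y := by
    intro n
    simp only [hγf, hγr, max_eq_left hL]
    rw [hidxtop n L (htL n), hend n]
  -- ultrafilter limit
  haveI : Nonempty X := ⟨x⟩
  set 𝒰 : Ultrafilter ℕ := Ultrafilter.of atTop with hU
  have hUle : (𝒰 : Filter ℕ) ≤ atTop := Ultrafilter.of_le _
  set γ : ℝ → X := fun s => (𝒰.map (fun n => γf n s) : Ultrafilter X).lim with hγ
  have htend : ∀ s, Tendsto (fun n => γf n s) (𝒰 : Filter ℕ) (𝓝 (γ s)) := by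
    intro s
    have := Ultrafilter.le_nhds_lim (𝒰.map (fun n => γf n s))
    rwa [Ultrafilter.coe_map] at this
  have hηtend : Tendsto (fun n : ℕ => 1/((n:ℝ)+1)) (𝒰 : Filter ℕ) (𝓝 0) :=
    (tendsto_one_div_add_atTop_nhds_zero_nat).mono_left hUle
  refine ⟨γ, ?_, ?_, ?_⟩
  · apply LipschitzWith.of_dist_le_mul
    intro s s'
    rw [NNReal.coe_one, one_mul]
    have h1 : Tendsto (fun n => dist (γf n s) (γf n s')) (𝒰 : Filter ℕ)
        (𝓝 (dist (γ s) (γ s'))) := (htend s).dist (htend s')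
    have h2 : Tendsto (fun n : ℕ => dist s s' + 1/((n:ℝ)+1)) (𝒰 : Filter ℕ)
        (𝓝 (dist s s' + 0)) := tendsto_const_nhds.add hηtend
    rw [add_zero] at h2
    exact le_of_tendsto_of_tendsto' h1 h2 (fun n => hγfdist n s s')
  · have h1 : Tendsto (fun n => γf n 0) (𝒰 : Filter ℕ) (𝓝 x) := by
      simp only [hγf0]
      exact tendsto_const_nhds
    exact tendsto_nhds_unique (htend 0) h1
  · have h1 : Tendsto (fun n => γf n L) (𝒰 : Filter ℕ) (𝓝 y) := by
      simp only [hγfL]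
      exact tendsto_const_nhds
    exact tendsto_nhds_unique (htend L) h1

lemma continuousOn_union_closed {Y : Type*} [TopologicalSpace Y] {f : X → Y} {s t : Set X}
    (hs : IsClosed s) (ht : IsClosed t) (h1 : ContinuousOn f s) (h2 : ContinuousOn f t) :
    ContinuousOn f (s ∪ t) := by
  intro z hz
  have cwas : ContinuousWithinAt f s z := by
    by_cases hzs : z ∈ s
    · exact h1 z hzs
    · exact continuousWithinAt_of_notMem_closure (by rwa [hs.closure_eq])
  have cwat : ContinuousWithinAt f t z := by
    by_cases hzt : z ∈ t
    · exact h2 z hzt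
    · exact continuousWithinAt_of_notMem_closure (by rwa [ht.closure_eq])
  exact cwas.union cwat

lemma intrinsicDist_le_of_lip {x y : X} {L : ℝ} (hL : 0 ≤ L) {γ : ℝ → X}
    (hγ : LipschitzWith 1 γ) (h0 : γ 0 = x) (hT : γ L = y) :
    intrinsicDist x y ≤ ENNReal.ofReal L := by
  calc intrinsicDist x y ≤ eVariationOn γ (Set.Icc 0 L) := by
        apply iInf_le_of_le L
        apply iInf_le_of_le hL
        apply iInf_le_of_le γ
        apply iInf_le_of_le hγ.continuous.continuousOn
        apply iInf_le_of_le h0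
        exact iInf_le _ hT
    _ ≤ ENNReal.ofReal L := lip_eVariationOn hγ hL

lemma intrinsicDist_triangle (x y z : X) :
    intrinsicDist x z ≤ intrinsicDist x y + intrinsicDist y z := by
  classical
  rcases eq_or_ne (intrinsicDist x y) ⊤ with h1 | h1
  · rw [h1, top_add]; exact le_top
  rcases eq_or_ne (intrinsicDist y z) ⊤ with h2 | h2
  · rw [h2, add_top]; exact le_top
  refine ENNReal.le_of_forall_pos_le_add fun ε hε _ => ?_
  have hε2 : ((ε:ℝ≥0∞)/2) ≠ 0 := by
    simp [ENNReal.div_eq_zero_iff]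
    exact_mod_cast hε.ne'
  have hx1 : intrinsicDist x y < intrinsicDist x y + ε/2 := ENNReal.lt_add_right h1 hε2
  have hx2 : intrinsicDist y z < intrinsicDist y z + ε/2 := ENNReal.lt_add_right h2 hε2
  rw [intrinsicDist] at hx1 hx2
  simp only [iInf_lt_iff] at hx1 hx2
  obtain ⟨T1, hT1, γ1, hc1, h01, hT1y, hv1⟩ := hx1
  obtain ⟨T2, hT2, γ2, hc2, h02, hT2z, hv2⟩ := hx2
  set T := T1 + T2 with hT
  set γ : ℝ → X := fun s => if s ≤ T1 then γ1 s else γ2 (s - T1) with hγ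
  have hTnn : (0:ℝ) ≤ T := by linarith
  have hT1T : T1 ≤ T := by linarith
  have heq1 : EqOn γ γ1 (Set.Icc 0 T1) := fun s hs => by
    simp only [hγ, if_pos hs.2]
  have heq2 : EqOn γ (fun s => γ2 (s - T1)) (Set.Icc T1 T) := by
    intro s hs
    rcases eq_or_lt_of_le hs.1 with hrfl | hlt
    · simp only [hγ, ← hrfl, le_refl, if_pos]
      rw [sub_self, h02, hT1y]
    · simp only [hγ, if_neg (not_le.2 hlt)]
  have hccomp : ContinuousOn (fun s => γ2 (s - T1)) (Set.Icc T1 T) := by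
    apply ContinuousOn.comp hc2 (Continuous.continuousOn (by continuity))
    intro s hs
    show s - T1 ∈ Set.Icc 0 T2
    exact ⟨by linarith [hs.1], by linarith [hs.2]⟩
  have hcont : ContinuousOn γ (Set.Icc 0 T) := by
    rw [← Set.Icc_union_Icc_eq_Icc hT1 hT1T]
    exact continuousOn_union_closed isClosed_Icc isClosed_Icc
      (hc1.congr heq1) (hccomp.congr heq2)
  have h0γ : γ 0 = x := by
    have : (0:ℝ) ∈ Set.Icc 0 T1 := ⟨le_refl 0, hT1⟩
    rw [heq1 this, h01]
  have hTγ : γ T = z := by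
    have : T ∈ Set.Icc T1 T := ⟨hT1T, le_refl T⟩
    rw [heq2 this]
    simp only [hT]
    rw [add_sub_cancel_left, hT2z]
  have hvar : eVariationOn γ (Set.Icc 0 T) ≤
      eVariationOn γ1 (Set.Icc 0 T1) + eVariationOn γ2 (Set.Icc 0 T2) := by
    have hsplit := eVariationOn.Icc_add_Icc γ (s := Set.univ) hT1 hT1T (mem_univ T1)
    simp only [Set.univ_inter] at hsplit
    rw [← hsplit]
    apply add_le_add
    · rw [eVariationOn.eq_of_eqOn heq1]
    · rw [eVariationOn.eq_of_eqOn heq2]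
      have hmono : MonotoneOn (fun s : ℝ => s - T1) (Set.Icc T1 T) :=
        fun a _ b _ hab => by simp only; linarith
      have hcomp := eVariationOn.comp_eq_of_monotoneOn γ2 (fun s : ℝ => s - T1) hmono
      rw [show (fun s : ℝ => γ2 (s - T1)) = γ2 ∘ (fun s : ℝ => s - T1) from rfl, hcomp]
      rw [Set.image_sub_const_Icc]
      simp only [sub_self, hT, add_sub_cancel_left, le_refl]
  have hle : intrinsicDist x z ≤ eVariationOn γ (Set.Icc 0 T) := by
    apply iInf_le_of_le T
    apply iInf_le_of_le hTnn
    apply iInf_le_of_le γ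
    apply iInf_le_of_le hcont
    apply iInf_le_of_le h0γ
    exact iInf_le _ hTγ
  calc intrinsicDist x z ≤ eVariationOn γ (Set.Icc 0 T) := hle
    _ ≤ eVariationOn γ1 (Set.Icc 0 T1) + eVariationOn γ2 (Set.Icc 0 T2) := hvar
    _ ≤ (intrinsicDist x y + ε/2) + (intrinsicDist y z + ε/2) := add_le_add hv1.le hv2.le
    _ = intrinsicDist x y + intrinsicDist y z + ε := by
      rw [add_add_add_comm, ENNReal.add_halves]

lemma main_bound [CompactSpace X] (h : HasE10 X) (y : X) :
    ∃ u : X → ℝ, Continuous u ∧ u y = 0 ∧ (∀ z, 0 ≤ u z) ∧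
      ∀ x, intrinsicDist x y ≤ ENNReal.ofReal (2 * u x) ∧
        intrinsicDist y x ≤ ENNReal.ofReal (2 * u x) := by
  obtain ⟨u, hu, hs, h0⟩ := h {y} isClosed_singleton ⟨y, rfl⟩
  haveI : Nonempty X := ⟨y⟩
  have hnn := u_nonneg hu hs h0
  refine ⟨u, hu, h0 y rfl, hnn, fun x => ?_⟩
  have hL : (0:ℝ) ≤ 2 * u x := by linarith [hnn x]
  have hch : ∀ η > (0:ℝ), ∃ N, ∃ c : ℕ → X, c 0 = x ∧ c N = y ∧
      (∀ i < N, dist (c i) (c (i+1)) ≤ η) ∧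
      (∑ i ∈ Finset.range N, dist (c i) (c (i+1))) ≤ 2 * u x := by
    intro η hη
    obtain ⟨N, c, hc0, hcK, hm, hd⟩ := chain_exists hu hs hnn x hη
    have hcN : c N = y := by simpa using hcK
    refine ⟨N, c, hc0, hcN, hm, ?_⟩
    calc ∑ i ∈ Finset.range N, dist (c i) (c (i+1))
        ≤ ∑ i ∈ Finset.range N, 2 * (u (c i) - u (c (i+1))) :=
          Finset.sum_le_sum (fun i hi => hd i (Finset.mem_range.1 hi))
      _ = 2 * ∑ i ∈ Finset.range N, (u (c i) - u (c (i+1))) := by rw [Finset.mul_sum]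
      _ = 2 * (u (c 0) - u (c N)) := by rw [Finset.sum_range_sub' (fun i => u (c i))]
      _ = 2 * u x := by rw [hc0, hcN, h0 y rfl]; ring
  have hch' : ∀ η > (0:ℝ), ∃ N, ∃ c : ℕ → X, c 0 = y ∧ c N = x ∧
      (∀ i < N, dist (c i) (c (i+1)) ≤ η) ∧
      (∑ i ∈ Finset.range N, dist (c i) (c (i+1))) ≤ 2 * u x := by
    intro η hη
    obtain ⟨N, c, hc0, hcN, hm, hlen⟩ := hch η hη
    refine ⟨N, fun i => c (N - i), by simp [hcN], by simp [hc0], ?_, ?_⟩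
    · intro i hi
      have h1 : N - (i+1) + 1 = N - i := by omega
      have h2 : N - (i+1) < N := by omega
      rw [show dist (c (N - i)) (c (N - (i+1))) =
        dist (c (N - (i+1))) (c (N - (i+1) + 1)) by rw [h1, dist_comm]]
      exact hm _ h2
    · have : ∀ i ∈ Finset.range N, dist (c (N - i)) (c (N - (i+1))) =
          (fun j => dist (c j) (c (j+1))) (N - 1 - i) := by
        intro i hi
        rw [Finset.mem_range] at hi
        have h1 : N - (i+1) = N - 1 - i := by omega
        have h2 : N - 1 - i + 1 = N - i := by omega
        simp only
        rw [h1, ← h2, dist_comm]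
      rw [Finset.sum_congr rfl this, Finset.sum_range_reflect (fun j => dist (c j) (c (j+1))) N]
      exact hlen
  constructor
  · obtain ⟨γ, hγ, hγ0, hγL⟩ := curve_of_chains x y hL hch
    exact intrinsicDist_le_of_lip hL hγ hγ0 hγL
  · obtain ⟨γ, hγ, hγ0, hγL⟩ := curve_of_chains y x hL hch'
    exact intrinsicDist_le_of_lip hL hγ hγ0 hγL


end AuxMain

/-- In a compact metric space with the `E_{1,0}`-property, the intrinsic
distance is finite and continuous. -/
theorem stmt15 {X : Type*} [MetricSpace X] [CompactSpace X] (h : HasE10 X) :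
    (∀ x y : X, intrinsicDist x y ≠ ⊤) ∧
      Continuous (fun p : X × X => (intrinsicDist p.1 p.2).toReal) := by
  have hfin : ∀ x y : X, intrinsicDist x y ≠ ⊤ := by
    intro x y
    obtain ⟨u, hu, hy0, hnn, hb⟩ := main_bound h y
    exact ne_top_of_le_ne_top ENNReal.ofReal_ne_top (hb x).1
  refine ⟨hfin, ?_⟩
  rw [Metric.continuous_iff]
  rintro ⟨x₀, y₀⟩ ε hε
  obtain ⟨u, hu, hu0, hunn, hub⟩ := main_bound h x₀
  obtain ⟨v, hv, hv0, hvnn, hvb⟩ := main_bound h y₀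
  set ε' := ε / 5 with hε'
  have hε'pos : 0 < ε' := by positivity
  -- choose δ by continuity of u at x₀ and v at y₀
  obtain ⟨δ₁, hδ₁, hδ₁p⟩ := Metric.continuous_iff.1 hu x₀ (ε'/2) (by positivity)
  obtain ⟨δ₂, hδ₂, hδ₂p⟩ := Metric.continuous_iff.1 hv y₀ (ε'/2) (by positivity)
  refine ⟨min δ₁ δ₂, lt_min hδ₁ hδ₂, ?_⟩
  rintro ⟨x, y⟩ hxy
  rw [Prod.dist_eq] at hxy
  simp only at hxy
  have hdx : dist x x₀ < δ₁ := lt_of_le_of_lt (le_max_left _ _) (lt_of_lt_of_le hxy (min_le_left _ _))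
  have hdy : dist y y₀ < δ₂ := lt_of_le_of_lt (le_max_right _ _) (lt_of_lt_of_le hxy (min_le_right _ _))
  have hux : 2 * u x < ε' := by
    have := hδ₁p x hdx
    rw [Real.dist_eq, hu0] at this
    have h2 : u x < ε'/2 := by
      have := abs_lt.1 this
      linarith [this.2]
    linarith [hunn x]
  have hvy : 2 * v y < ε' := by
    have := hδ₂p y hdy
    rw [Real.dist_eq, hv0] at this
    have h2 : v y < ε'/2 := by
      have h3 := abs_lt.1 this
      linarith [h3.2]
    linarith [hvnn y]
  -- four small distances
  have b1 : intrinsicDist x x₀ ≤ ENNReal.ofReal ε' := le_trans (hub x).1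
    (ENNReal.ofReal_le_ofReal hux.le)
  have b2 : intrinsicDist x₀ x ≤ ENNReal.ofReal ε' := le_trans (hub x).2
    (ENNReal.ofReal_le_ofReal hux.le)
  have b3 : intrinsicDist y y₀ ≤ ENNReal.ofReal ε' := le_trans (hvb y).1
    (ENNReal.ofReal_le_ofReal hvy.le)
  have b4 : intrinsicDist y₀ y ≤ ENNReal.ofReal ε' := le_trans (hvb y).2
    (ENNReal.ofReal_le_ofReal hvy.le)
  -- triangle comparisons
  have t1 : intrinsicDist x y ≤ intrinsicDist x₀ y₀ + ENNReal.ofReal (2*ε') := by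
    calc intrinsicDist x y ≤ intrinsicDist x x₀ + intrinsicDist x₀ y :=
          intrinsicDist_triangle x x₀ y
      _ ≤ intrinsicDist x x₀ + (intrinsicDist x₀ y₀ + intrinsicDist y₀ y) :=
          add_le_add le_rfl (intrinsicDist_triangle x₀ y₀ y)
      _ ≤ ENNReal.ofReal ε' + (intrinsicDist x₀ y₀ + ENNReal.ofReal ε') :=
          add_le_add b1 (add_le_add le_rfl b4)
      _ = intrinsicDist x₀ y₀ + (ENNReal.ofReal ε' + ENNReal.ofReal ε') := by ring
      _ = intrinsicDist x₀ y₀ + ENNReal.ofReal (2*ε') := by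
          rw [← ENNReal.ofReal_add hε'pos.le hε'pos.le]; ring_nf
  have t2 : intrinsicDist x₀ y₀ ≤ intrinsicDist x y + ENNReal.ofReal (2*ε') := by
    calc intrinsicDist x₀ y₀ ≤ intrinsicDist x₀ x + intrinsicDist x y₀ :=
          intrinsicDist_triangle x₀ x y₀
      _ ≤ intrinsicDist x₀ x + (intrinsicDist x y + intrinsicDist y y₀) :=
          add_le_add le_rfl (intrinsicDist_triangle x y y₀)
      _ ≤ ENNReal.ofReal ε' + (intrinsicDist x y + ENNReal.ofReal ε') :=
          add_le_add b2 (add_le_add le_rfl b3)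
      _ = intrinsicDist x y + (ENNReal.ofReal ε' + ENNReal.ofReal ε') := by ring
      _ = intrinsicDist x y + ENNReal.ofReal (2*ε') := by
          rw [← ENNReal.ofReal_add hε'pos.le hε'pos.le]; ring_nf
  -- to real
  have hfin1 : intrinsicDist x y ≠ ⊤ := hfin x y
  have hfin2 : intrinsicDist x₀ y₀ ≠ ⊤ := hfin x₀ y₀
  have r1 : (intrinsicDist x y).toReal ≤ (intrinsicDist x₀ y₀).toReal + 2*ε' := by
    have := ENNReal.toReal_mono (by
      exact ENNReal.add_ne_top.2 ⟨hfin2, ENNReal.ofReal_ne_top⟩) t1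
    rwa [ENNReal.toReal_add hfin2 ENNReal.ofReal_ne_top,
      ENNReal.toReal_ofReal (by positivity)] at this
  have r2 : (intrinsicDist x₀ y₀).toReal ≤ (intrinsicDist x y).toReal + 2*ε' := by
    have := ENNReal.toReal_mono (by
      exact ENNReal.add_ne_top.2 ⟨hfin1, ENNReal.ofReal_ne_top⟩) t2
    rwa [ENNReal.toReal_add hfin1 ENNReal.ofReal_ne_top,
      ENNReal.toReal_ofReal (by positivity)] at this
  rw [Real.dist_eq, abs_lt]
  constructor <;> linarith
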